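/- Let k be a field of characteristic zero, V a finite-dimensional k-vector space, and ψ a nondegenerate alternating bilinear form on V. Then the Lie algebra 𝔰𝔭(V, ψ) is generated, as a Lie algebra, by the set of endomorphisms {N_δ : δ ∈ V}. -/

import Mathlib

/-- For a bilinear form `ψ` on `V` and `δ ∈ V`, the endomorphism `N_δ : x ↦ ψ(x, δ) δ`. -/
noncomputable def vanishingCycleEndo {k V : Type*} [Field k] [AddCommGroup V] [Module k V]
    (ψ : LinearMap.BilinForm k V) (δ : V) : Module.End k V :=
  LinearMap.smulRight (ψ.flip δ) δ

attribute [local instance] LieRing.ofAssociativeRing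

/-- The fact used at the end of the proof of Lemma (5.11) of Deligne's Weil I: for a
nondegenerate alternating form `ψ` on a finite-dimensional vector space `V` over a field
of characteristic zero, the Lie algebra `𝔰𝔭(V, ψ)` is generated, as a Lie algebra, by
the endomorphisms `N_δ : x ↦ ψ(x, δ) δ` for `δ ∈ V`. -/
theorem symplectic_lieAlgebra_generated_by_vanishing_cycles
    {k V : Type*} [Field k] [CharZero k] [AddCommGroup V] [Module k V]
    [FiniteDimensional k V]
    (ψ : LinearMap.BilinForm k V) (hnd : ψ.Nondegenerate) (halt : ψ.IsAlt) :
    skewAdjointLieSubalgebra ψ =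
      LieSubalgebra.lieSpan k (Module.End k V) (Set.range (vanishingCycleEndo ψ)) := by
  have hskew : ∀ x y : V, ψ x y = -ψ y x := fun x y => (halt.neg_eq y x).symm
  apply le_antisymm
  swap
  · -- each N_δ is skew-adjoint
    rw [LieSubalgebra.lieSpan_le]
    rintro _ ⟨δ, rfl⟩
    have : ψ.IsSkewAdjoint (vanishingCycleEndo ψ δ) := by
      intro x y
      simp only [vanishingCycleEndo, LinearMap.smulRight_apply, LinearMap.neg_apply,
        map_smul, LinearMap.smul_apply, map_neg, LinearMap.BilinForm.flip_apply,
        smul_eq_mul, smul_neg, Pi.neg_apply]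
      rw [hskew δ y]
      ring
    rw [SetLike.mem_coe, ← LieSubalgebra.mem_toSubmodule]
    exact (LinearMap.mem_skewAdjointSubmodule (B := ψ) (vanishingCycleEndo ψ δ)).mpr this
  · -- skew-adjoint ⊆ lieSpan : in fact ⊆ linear span
    intro f hf
    have hf2 : ψ.IsSkewAdjoint f :=
      (LinearMap.mem_skewAdjointSubmodule (B := ψ) f).mp
        ((LieSubalgebra.mem_toSubmodule _).mpr hf)
    have hf' : ∀ x y : V, ψ (f x) y = -ψ x (f y) := by
      intro x y
      have := hf2 (x := x) (y := y)
      simpa using this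
    have hspan : ∀ v : V, vanishingCycleEndo ψ v ∈
        Submodule.span k (Set.range (vanishingCycleEndo ψ)) :=
      fun v => Submodule.subset_span ⟨v, rfl⟩
    suffices h : f ∈ Submodule.span k (Set.range (vanishingCycleEndo ψ)) by
      have hle : Submodule.span k (Set.range (vanishingCycleEndo ψ)) ≤
          (LieSubalgebra.lieSpan k (Module.End k V)
            (Set.range (vanishingCycleEndo ψ))).toSubmodule :=
        Submodule.span_le.mpr (LieSubalgebra.subset_lieSpan)
      exact hle h
    -- Set up the ψ-dual basis
    have hnd' : ψ.flip.Nondegenerate := hnd.flip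
    classical
    set b := Module.finBasis k V with hb
    set ε : Fin (Module.finrank k V) → V :=
      fun i => (ψ.flip.toDual hnd').symm (b.coord i) with hε
    have hεdef : ∀ i x, ψ x (ε i) = b.repr x i := by
      intro i x
      have h1 : ψ.flip.toDual hnd' (ε i) = b.coord i := by
        simp [hε]
      have h2 : ψ.flip (ε i) = b.coord i := by
        ext y
        rw [← h1]
        rfl
      calc ψ x (ε i) = ψ.flip (ε i) x := rfl
        _ = b.coord i x := by rw [h2]
        _ = b.repr x i := rfl
    -- identity (1): ∑ ψ x εᵢ • bᵢ = x
    have key1 : ∀ x : V, (∑ i, ψ x (ε i) • b i) = x := by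
      intro x
      simp_rw [hεdef]
      exact b.sum_repr x
    -- identity (2): ∑ ψ x bᵢ • εᵢ = -x
    have key2 : ∀ x : V, (∑ i, ψ x (b i) • ε i) = -x := by
      intro x
      have h0 : ((∑ i, ψ x (b i) • ε i) + x) = 0 := by
        apply hnd.1
        intro y
        rw [map_add, LinearMap.add_apply, LinearMap.BilinForm.sum_left]
        have hterm : ∀ i, ψ (ψ x (b i) • ε i) y = -(ψ x (b i) * b.repr y i) := by
          intro i
          rw [LinearMap.BilinForm.smul_left, hskew (ε i) y, hεdef]
          ring
        rw [Finset.sum_congr rfl fun i _ => hterm i]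
        have hx : ψ x y = ∑ i, ψ x (b i) * b.repr y i := by
          conv_lhs => rw [← b.sum_repr y]
          rw [LinearMap.BilinForm.sum_right]
          apply Finset.sum_congr rfl
          intro i _
          rw [LinearMap.BilinForm.smul_right]
          ring
        rw [hx]
        simp
      linear_combination (norm := abel) h0
    -- the explicit formula
    have hformula : f = (2⁻¹ : k) • ∑ i,
        (vanishingCycleEndo ψ (ε i + f (b i)) - vanishingCycleEndo ψ (ε i)
          - vanishingCycleEndo ψ (f (b i))) := by
      ext x
      simp only [LinearMap.smul_apply, LinearMap.sum_apply, LinearMap.sub_apply,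
        vanishingCycleEndo, LinearMap.smulRight_apply, LinearMap.BilinForm.flip_apply]
      have hterm : ∀ i, ψ x (ε i + f (b i)) • (ε i + f (b i)) - ψ x (ε i) • ε i
          - ψ x (f (b i)) • f (b i)
          = ψ x (ε i) • f (b i) + ψ x (f (b i)) • ε i := by
        intro i
        rw [map_add, add_smul, smul_add, smul_add]
        abel
      rw [Finset.sum_congr rfl fun i _ => hterm i, Finset.sum_add_distrib]
      have h1 : (∑ i, ψ x (ε i) • f (b i)) = f x := by
        simp_rw [← map_smul]
        rw [← map_sum, key1 x]
      have h2 : (∑ i, ψ x (f (b i)) • ε i) = f x := by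
        have heq : ∀ i, ψ x (f (b i)) = -ψ (f x) (b i) := by
          intro i
          rw [hskew x (f (b i)), hf' (b i) x, hskew (b i) (f x)]
          ring
        simp_rw [heq, neg_smul, Finset.sum_neg_distrib]
        rw [key2 (f x), neg_neg]
      rw [h1, h2, ← two_smul k (f x), smul_smul]
      norm_num
    rw [hformula]
    apply Submodule.smul_mem
    apply Submodule.sum_mem
    intro i _
    exact Submodule.sub_mem _ (Submodule.sub_mem _ (hspan _) (hspan _)) (hspan _)
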